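/- (Lower bound on the number of extreme points.) Assume m ≥ 2n + 2 − ℓ. Let w* ∈ S be a maximizer of the dual problem, suppose the coefficient pair (α̃, β̃) attains d(w*), i.e., Σ_j w*_j |q̃(x_j)|² = 1 and Σ_j w*_j |f_j q̃(x_j) − p̃(x_j)|² = d(w*), suppose β̃_j ≠ 0 for all j ∈ {1, …, ℓ} and q̃(x_j) ≠ 0 for all j ∈ {1, …, m}, and suppose √(d(w*)) = e(ξ̃) := max_{1≤j≤m} |f_j − p̃(x_j)/q̃(x_j)|. Then the set of extreme points X_e(ξ̃) = { j ∈ {1, …, m} : |f_j − p̃(x_j)/q̃(x_j)| = e(ξ̃) } contains at least n + 2 − ℓ indices. -/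
import Mathlib

open Finset

/-- The denominator of the interpolation-constrained barycentric form:
q(z) = Σ_{j=1}^{n+1} β_j/(z − t_j). -/
noncomputable def baryQ {n : ℕ} (t β : Fin (n + 1) → ℂ) (z : ℂ) : ℂ :=
  ∑ j, β j / (z - t j)

/-- The numerator of the interpolation-constrained barycentric form:
p(z) = Σ_{j<ℓ} β_j y_j/(z − t_j) + Σ_{j≥ℓ} α_j/(z − t_j). -/
noncomputable def baryP {n : ℕ} (ℓ : ℕ) (t y α β : Fin (n + 1) → ℂ) (z : ℂ) : ℂ :=
  ∑ j : Fin (n + 1), (if (j : ℕ) < ℓ then β j * y j else α j) / (z - t j)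

/-- The probability simplex S = {w ∈ ℝ^m : w ≥ 0, Σ_j w_j = 1}. -/
def inS {m : ℕ} (w : Fin m → ℝ) : Prop :=
  (∀ j, 0 ≤ w j) ∧ ∑ j, w j = 1

/-- The Lagrange dual function
d(w) = inf { Σ_j w_j |f_j q(x_j) − p(x_j)|² : (α, β), Σ_j w_j |q(x_j)|² = 1 }. -/
noncomputable def dualFun {n m : ℕ} (ℓ : ℕ) (t y : Fin (n + 1) → ℂ)
    (x f : Fin m → ℂ) (w : Fin m → ℝ) : ℝ :=
  sInf {r : ℝ | ∃ α β : Fin (n + 1) → ℂ,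
    (∑ j, w j * ‖baryQ t β (x j)‖ ^ 2) = 1 ∧
    r = ∑ j, w j * ‖f j * baryQ t β (x j) - baryP ℓ t y α β (x j)‖ ^ 2}

open Polynomial in
lemma baryQ_eval {n : ℕ} (t : Fin (n + 1) → ℂ) (ht : Function.Injective t)
    (P : Polynomial ℂ) (hP : P.degree < (n + 1 : ℕ)) (z : ℂ) (hz : ∀ i, z ≠ t i) :
    baryQ t (fun i => P.eval (t i) / ∏ i' ∈ univ.erase i, (t i - t i')) z
      = P.eval z / ∏ i, (z - t i) := by
  have hinj : Set.InjOn t (univ : Finset (Fin (n + 1))) := fun a _ b _ h => ht h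
  have hzt : ∀ j, z - t j ≠ 0 := fun j => sub_ne_zero.2 (hz j)
  have hPG : P = Lagrange.interpolate univ t (fun i => P.eval (t i)) :=
    Lagrange.eq_interpolate (f := P) hinj (by simpa using hP)
  have key : P.eval z
      = ∑ i, P.eval (t i) * ((∏ j ∈ univ.erase i, (t i - t j))⁻¹ * ∏ j ∈ univ.erase i, (z - t j)) := by
    conv_lhs => rw [hPG]
    rw [Lagrange.interpolate_apply, eval_finset_sum]
    refine Finset.sum_congr rfl fun i _ => ?_
    rw [eval_mul, eval_C, Lagrange.basis, eval_prod, ← Finset.prod_inv_distrib,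
      ← Finset.prod_mul_distrib]
    refine congrArg _ (Finset.prod_congr rfl fun j _ => ?_)
    rw [Lagrange.basisDivisor, eval_mul, eval_C, eval_sub, eval_X, eval_C]
  rw [baryQ, key, Finset.sum_div]
  refine Finset.sum_congr rfl fun i _ => ?_
  have hB : (∏ j ∈ univ.erase i, (z - t j)) ≠ 0 :=
    Finset.prod_ne_zero_iff.2 fun j _ => hzt j
  rw [← Finset.mul_prod_erase univ _ (mem_univ i), ← mul_assoc,
    mul_div_mul_right _ _ hB, div_eq_mul_inv (P.eval (t i)), div_eq_mul_inv]

lemma baryQ_smul {n : ℕ} (t β : Fin (n + 1) → ℂ) (c : ℂ) (z : ℂ) :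
    baryQ t (fun i => c * β i) z = c * baryQ t β z := by
  rw [baryQ, baryQ, Finset.mul_sum]
  exact Finset.sum_congr rfl fun i _ => by rw [mul_div_assoc]

lemma baryP_smul {n : ℕ} (ℓ : ℕ) (t y α β : Fin (n + 1) → ℂ) (c : ℂ) (z : ℂ) :
    baryP ℓ t y (fun i => c * α i) (fun i => c * β i) z = c * baryP ℓ t y α β z := by
  rw [baryP, baryP, Finset.mul_sum]
  refine Finset.sum_congr rfl fun i _ => ?_
  split <;> rw [mul_div_assoc] <;> ring_nf

/-- **Lower bound on the number of extreme points** (Theorem 5.3 of the paper).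
Assume m ≥ 2n + 2 − ℓ and the sample nodes are pairwise distinct. Under the
strong-duality conditions — w* maximizes the dual problem, (α̃, β̃) attains d(w*)
with β̃_j ≠ 0 for j ≤ ℓ and q̃ nonvanishing at the sample nodes, and
√(d(w*)) = e(ξ̃) — the set of extreme points
X_e(ξ̃) = {j : |f_j − ξ̃(x_j)| = e(ξ̃)} contains at least n + 2 − ℓ indices. -/
theorem extreme_points_lower_bound {n m : ℕ} (ℓ : ℕ) (hℓ : ℓ ≤ n + 1) (hm : 0 < m)
    (hm2 : 2 * n + 2 - ℓ ≤ m)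
    (t : Fin (n + 1) → ℂ) (ht : Function.Injective t) (y : Fin (n + 1) → ℂ)
    (x f : Fin m → ℂ) (hx : Function.Injective x) (hxt : ∀ i j, x i ≠ t j)
    (wstar : Fin m → ℝ) (hwS : inS wstar)
    (hwmax : ∀ w : Fin m → ℝ, inS w → dualFun ℓ t y x f w ≤ dualFun ℓ t y x f wstar)
    (αt βt : Fin (n + 1) → ℂ)
    (hfeas : (∑ j, wstar j * ‖baryQ t βt (x j)‖ ^ 2) = 1)
    (hattain : (∑ j, wstar j * ‖f j * baryQ t βt (x j) - baryP ℓ t y αt βt (x j)‖ ^ 2) =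
      dualFun ℓ t y x f wstar)
    (hβ : ∀ j : Fin (n + 1), (j : ℕ) < ℓ → βt j ≠ 0)
    (hqx : ∀ j, baryQ t βt (x j) ≠ 0)
    (hsd : Real.sqrt (dualFun ℓ t y x f wstar) =
      ⨆ j, ‖f j - baryP ℓ t y αt βt (x j) / baryQ t βt (x j)‖) :
    n + 2 - ℓ ≤
      {j : Fin m | ‖f j - baryP ℓ t y αt βt (x j) / baryQ t βt (x j)‖ =
        ⨆ i, ‖f i - baryP ℓ t y αt βt (x i) / baryQ t βt (x i)‖}.ncard := by
  classical
  set ξ : Fin m → ℝ := fun j => ‖f j - baryP ℓ t y αt βt (x j) / baryQ t βt (x j)‖ with hξ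
  set E : ℝ := ⨆ i, ξ i with hE
  have : Nonempty (Fin m) := ⟨⟨0, hm⟩⟩
  have hle : ∀ j, ξ j ≤ E := fun j =>
    le_ciSup (Set.Finite.bddAbove (Set.finite_range ξ)) j
  have hE0 : 0 ≤ E := le_trans (norm_nonneg _) (hle ⟨0, hm⟩)
  set d : ℝ := dualFun ℓ t y x f wstar with hd
  have hd0 : 0 ≤ d := by
    rw [← hattain]
    exact Finset.sum_nonneg fun j _ => mul_nonneg (hwS.1 j) (sq_nonneg _)
  have hdE : d = E ^ 2 := by
    rw [← hsd, Real.sq_sqrt hd0]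
  rcases eq_or_lt_of_le hE0 with hEz | hEpos
  · -- E = 0 : every point is extreme
    have hall : {j : Fin m | ξ j = E} = Set.univ := by
      ext j
      simp only [Set.mem_setOf_eq, Set.mem_univ, iff_true]
      exact le_antisymm (hle j) (hEz ▸ norm_nonneg _)
    rw [hall, Set.ncard_univ]
    simp only [Nat.card_eq_fintype_card, Fintype.card_fin]
    omega
  · -- E > 0
    set supp : Finset (Fin m) := univ.filter (fun j => wstar j ≠ 0) with hsupp
    -- complementary slackness: support points are extreme
    have hnorm : ∀ j, ‖f j * baryQ t βt (x j) - baryP ℓ t y αt βt (x j)‖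
        = ξ j * ‖baryQ t βt (x j)‖ := by
      intro j
      rw [← norm_mul]
      congr 1
      rw [sub_mul, div_mul_cancel₀ _ (hqx j)]
    have hslack : ∀ j ∈ (univ : Finset (Fin m)),
        wstar j * ((E ^ 2 - ξ j ^ 2) * ‖baryQ t βt (x j)‖ ^ 2) = 0 := by
      have hsum : ∑ j, wstar j * ((E ^ 2 - ξ j ^ 2) * ‖baryQ t βt (x j)‖ ^ 2) = 0 := by
        have expand : ∀ j, wstar j * ((E ^ 2 - ξ j ^ 2) * ‖baryQ t βt (x j)‖ ^ 2)
            = E ^ 2 * (wstar j * ‖baryQ t βt (x j)‖ ^ 2)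
              - wstar j * ‖f j * baryQ t βt (x j) - baryP ℓ t y αt βt (x j)‖ ^ 2 := by
          intro j; rw [hnorm j, mul_pow]; ring
        simp only [expand]
        rw [Finset.sum_sub_distrib, ← Finset.mul_sum, hfeas, hattain, hdE]
        ring
      refine (Finset.sum_eq_zero_iff_of_nonneg fun j _ => ?_).1 hsum
      refine mul_nonneg (hwS.1 j) (mul_nonneg ?_ (sq_nonneg _))
      have := hle j
      nlinarith [norm_nonneg (f j - baryP ℓ t y αt βt (x j) / baryQ t βt (x j))]
    have hsupp_ext : ∀ j ∈ supp, ξ j = E := by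
      intro j hj
      have hw : wstar j ≠ 0 := (Finset.mem_filter.1 hj).2
      have h0 := hslack j (mem_univ j)
      have hq2 : ‖baryQ t βt (x j)‖ ^ 2 ≠ 0 := pow_ne_zero _ (norm_ne_zero_iff.2 (hqx j))
      have : E ^ 2 - ξ j ^ 2 = 0 := by
        rcases mul_eq_zero.1 h0 with h | h
        · exact absurd h hw
        · rcases mul_eq_zero.1 h with h | h
          · exact h
          · exact absurd h hq2
      have hsq : ξ j ^ 2 = E ^ 2 := by linarith
      calc ξ j = Real.sqrt (ξ j ^ 2) := (Real.sqrt_sq (norm_nonneg _)).symm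
        _ = Real.sqrt (E ^ 2) := by rw [hsq]
        _ = E := Real.sqrt_sq hE0
    -- support nonempty
    have hsupp_ne : supp.Nonempty := by
      by_contra hempty
      rw [Finset.not_nonempty_iff_eq_empty] at hempty
      have : ∑ j, wstar j = 0 := by
        refine Finset.sum_eq_zero fun j _ => ?_
        by_contra hwj
        have : j ∈ supp := Finset.mem_filter.2 ⟨mem_univ j, hwj⟩
        rw [hempty] at this; exact absurd this (Finset.notMem_empty j)
      rw [hwS.2] at this; norm_num at this
    -- key cardinality bound on support
    have hkey : n + 2 - ℓ ≤ supp.card := by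
      by_contra hcon
      push_neg at hcon
      obtain ⟨j0, hj0⟩ := hsupp_ne
      have hcard1 : 1 ≤ supp.card := Finset.card_pos.2 ⟨j0, hj0⟩
      have hkℓ : supp.card + ℓ ≤ n + 1 := by omega
      have hℓn : ℓ ≤ n := by omega
      -- construct a feasible point with objective 0
      set Tℓ : Finset (Fin (n + 1)) := univ.filter (fun i => (i : ℕ) < ℓ) with hTℓ
      have hTℓcard : Tℓ.card = ℓ := by
        have : Tℓ = Finset.map (Fin.castLEEmb hℓ) univ := by
          ext i
          simp only [hTℓ, Finset.mem_filter, mem_univ, true_and, Finset.mem_map,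
            Fin.castLEEmb, Function.Embedding.coeFn_mk]
          constructor
          · intro hi; exact ⟨⟨(i : ℕ), hi⟩, by ext; simp [Fin.castLE]⟩
          · rintro ⟨a, rfl⟩; exact a.2
        rw [this, Finset.card_map, Finset.card_univ, Fintype.card_fin]
      set Q : Polynomial ℂ := Lagrange.nodal Tℓ t with hQ
      set L : Polynomial ℂ := Lagrange.interpolate supp x f with hL
      set R : Polynomial ℂ := Q * L with hR
      have hxInj : Set.InjOn x (supp : Set (Fin m)) := fun a _ b _ h => hx h
      have hQdeg : Q.degree = (ℓ : ℕ) := by rw [hQ, Lagrange.degree_nodal, hTℓcard]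
      have hLdeg : L.degree < (supp.card : ℕ) := Lagrange.degree_interpolate_lt _ hxInj
      have hRdeg : R.degree < ((n + 1 : ℕ) : WithBot ℕ) := by
        rw [hR, Polynomial.degree_mul, hQdeg]
        calc (ℓ : WithBot ℕ) + L.degree < (ℓ : WithBot ℕ) + (supp.card : ℕ) :=
              WithBot.add_lt_add_left (by exact_mod_cast WithBot.coe_ne_bot) hLdeg
          _ = ((ℓ + supp.card : ℕ) : WithBot ℕ) := by push_cast; ring
          _ ≤ ((n + 1 : ℕ) : WithBot ℕ) := by exact_mod_cast (by omega : ℓ + supp.card ≤ n + 1)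
      have hQdeg' : Q.degree < ((n + 1 : ℕ) : WithBot ℕ) := by
        rw [hQdeg]; exact_mod_cast (by omega : ℓ < n + 1)
      set βQ : Fin (n + 1) → ℂ := fun i => Q.eval (t i) / ∏ i' ∈ univ.erase i, (t i - t i') with hβQ
      set αR : Fin (n + 1) → ℂ := fun i => R.eval (t i) / ∏ i' ∈ univ.erase i, (t i - t i') with hαR
      have hxti : ∀ j, ∀ i, x j ≠ t i := fun j i => hxt j i
      have hQx : ∀ j, baryQ t βQ (x j) = Q.eval (x j) / ∏ i, (x j - t i) := fun j =>
        baryQ_eval t ht Q hQdeg' (x j) (hxti j)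
      have hQtz : ∀ i : Fin (n + 1), (i : ℕ) < ℓ → Q.eval (t i) = 0 := by
        intro i hi
        exact Lagrange.eval_nodal_at_node (Finset.mem_filter.2 ⟨mem_univ i, hi⟩)
      have hPx : ∀ j, baryP ℓ t y αR βQ (x j) = R.eval (x j) / ∏ i, (x j - t i) := by
        intro j
        have : baryP ℓ t y αR βQ (x j) = baryQ t αR (x j) := by
          rw [baryP, baryQ]
          refine Finset.sum_congr rfl fun i _ => ?_
          split
          · next hi =>
              have h1 : βQ i = 0 := by rw [hβQ]; simp [hQtz i hi]
              have h2 : αR i = 0 := by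
                rw [hαR]; simp [hR, Polynomial.eval_mul, hQtz i hi]
              rw [h1, h2, zero_mul]
          · rfl
        rw [this]
        exact baryQ_eval t ht R hRdeg (x j) (hxti j)
      have hQxne : ∀ j, Q.eval (x j) ≠ 0 := by
        intro j
        rw [hQ, Lagrange.eval_nodal]
        exact Finset.prod_ne_zero_iff.2 fun i _ => sub_ne_zero.2 (hxt j i)
      have hDne : ∀ j, (∏ i, (x j - t i)) ≠ 0 := fun j =>
        Finset.prod_ne_zero_iff.2 fun i _ => sub_ne_zero.2 (hxt j i)
      have hqQne : ∀ j, baryQ t βQ (x j) ≠ 0 := by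
        intro j; rw [hQx j]
        exact div_ne_zero (hQxne j) (hDne j)
      -- residual vanishes on the support
      have hres : ∀ j ∈ supp, f j * baryQ t βQ (x j) - baryP ℓ t y αR βQ (x j) = 0 := by
        intro j hj
        rw [hQx j, hPx j]
        have hRj : R.eval (x j) = Q.eval (x j) * f j := by
          rw [hR, Polynomial.eval_mul, hL,
            Lagrange.eval_interpolate_at_node f hxInj hj]
        rw [hRj]
        field_simp
        ring
      -- normalization
      set S : ℝ := ∑ j, wstar j * ‖baryQ t βQ (x j)‖ ^ 2 with hS
      have hSpos : 0 < S := by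
        have hterm : 0 < wstar j0 * ‖baryQ t βQ (x j0)‖ ^ 2 := by
          have hw0 : 0 < wstar j0 :=
            lt_of_le_of_ne (hwS.1 j0) (Ne.symm (Finset.mem_filter.1 hj0).2)
          have : 0 < ‖baryQ t βQ (x j0)‖ ^ 2 :=
            pow_pos (norm_pos_iff.2 (hqQne j0)) 2
          exact mul_pos hw0 this
        calc (0 : ℝ) < wstar j0 * ‖baryQ t βQ (x j0)‖ ^ 2 := hterm
          _ ≤ S := Finset.single_le_sum (f := fun j => wstar j * ‖baryQ t βQ (x j)‖ ^ 2)
              (fun j _ => mul_nonneg (hwS.1 j) (sq_nonneg _)) (mem_univ j0)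
      set c : ℝ := (Real.sqrt S)⁻¹ with hc
      have hc0 : 0 ≤ c := inv_nonneg.2 (Real.sqrt_nonneg _)
      have hc2 : c ^ 2 * S = 1 := by
        rw [hc, ← Real.sqrt_inv, Real.sq_sqrt (inv_nonneg.2 hSpos.le)]
        exact inv_mul_cancel₀ hSpos.ne'
      set β' : Fin (n + 1) → ℂ := fun i => (c : ℂ) * βQ i with hβ'
      set α' : Fin (n + 1) → ℂ := fun i => (c : ℂ) * αR i with hα'
      have hq' : ∀ z, baryQ t β' z = (c : ℂ) * baryQ t βQ z := fun z => baryQ_smul t βQ _ z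
      have hp' : ∀ z, baryP ℓ t y α' β' z = (c : ℂ) * baryP ℓ t y αR βQ z := fun z =>
        baryP_smul ℓ t y αR βQ _ z
      have hfeas' : (∑ j, wstar j * ‖baryQ t β' (x j)‖ ^ 2) = 1 := by
        have : ∀ j, wstar j * ‖baryQ t β' (x j)‖ ^ 2
            = c ^ 2 * (wstar j * ‖baryQ t βQ (x j)‖ ^ 2) := by
          intro j
          rw [hq' (x j), norm_mul, Complex.norm_real, Real.norm_of_nonneg hc0, mul_pow]
          ring
        simp only [this]
        rw [← Finset.mul_sum, ← hS, hc2]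
      have hobj : (0 : ℝ) = ∑ j, wstar j * ‖f j * baryQ t β' (x j) - baryP ℓ t y α' β' (x j)‖ ^ 2 := by
        symm
        refine Finset.sum_eq_zero fun j _ => ?_
        by_cases hj : j ∈ supp
        · rw [hq' (x j), hp' (x j)]
          have : f j * ((c : ℂ) * baryQ t βQ (x j)) - (c : ℂ) * baryP ℓ t y αR βQ (x j)
              = (c : ℂ) * (f j * baryQ t βQ (x j) - baryP ℓ t y αR βQ (x j)) := by ring
          rw [this, hres j hj, mul_zero, norm_zero]
          ring
        · have : wstar j = 0 := by
            by_contra hwj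
            exact hj (Finset.mem_filter.2 ⟨mem_univ j, hwj⟩)
          rw [this, zero_mul]
      have hmem : (0 : ℝ) ∈ {r : ℝ | ∃ α β : Fin (n + 1) → ℂ,
          (∑ j, wstar j * ‖baryQ t β (x j)‖ ^ 2) = 1 ∧
          r = ∑ j, wstar j * ‖f j * baryQ t β (x j) - baryP ℓ t y α β (x j)‖ ^ 2} :=
        ⟨α', β', hfeas', hobj⟩
      have hbdd : BddBelow {r : ℝ | ∃ α β : Fin (n + 1) → ℂ,
          (∑ j, wstar j * ‖baryQ t β (x j)‖ ^ 2) = 1 ∧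
          r = ∑ j, wstar j * ‖f j * baryQ t β (x j) - baryP ℓ t y α β (x j)‖ ^ 2} := by
        refine ⟨0, fun r hr => ?_⟩
        obtain ⟨α, β, _, hrr⟩ := hr
        rw [hrr]
        exact Finset.sum_nonneg fun j _ => mul_nonneg (hwS.1 j) (sq_nonneg _)
      have hdle : d ≤ 0 := csInf_le hbdd hmem
      have : 0 < d := hdE ▸ pow_pos hEpos 2
      linarith
    -- conclude
    have hsub : (supp : Set (Fin m)) ⊆ {j : Fin m | ξ j = E} := fun j hj =>
      hsupp_ext j hj
    calc n + 2 - ℓ ≤ supp.card := hkey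
      _ = (supp : Set (Fin m)).ncard := (Set.ncard_coe_finset _).symm
      _ ≤ {j : Fin m | ξ j = E}.ncard := Set.ncard_le_ncard hsub (Set.toFinite _)
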